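/- Let v = (-1, 1, 1)ᵀ ∈ ℝ³ and let M be the 3×3 real matrix with rows (1, 0, 1), (1, 1, 0), (0, 0, 1). Define f(S) = dist²(v, Range M(S)) for S ⊆ {1,2,3}. Then f({1,2}) − f({1,2,3}) > f({1}) − f({1,3}); consequently f is not supermodular. -/

import Mathlib

/-- The column of the matrix `M` with index `j`, viewed as a vector in
Euclidean space (so that distances are Euclidean `ℓ²` distances). -/
noncomputable def col (M : Matrix (Fin 3) (Fin 3) ℝ) (j : Fin 3) :
    EuclideanSpace ℝ (Fin 3) :=
  (WithLp.equiv 2 (Fin 3 → ℝ)).symm fun i => M i j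

/-- `Range M(S)`: the span of the columns of `M` with index in `S`. -/
noncomputable def colSpan (M : Matrix (Fin 3) (Fin 3) ℝ) (S : Set (Fin 3)) :
    Submodule ℝ (EuclideanSpace ℝ (Fin 3)) :=
  Submodule.span ℝ (col M '' S)

/-- `f(S) = dist²(v, Range M(S))`. -/
noncomputable def distSq (v : EuclideanSpace ℝ (Fin 3))
    (M : Matrix (Fin 3) (Fin 3) ℝ) (S : Set (Fin 3)) : ℝ :=
  (Metric.infDist v (colSpan M S : Set (EuclideanSpace ℝ (Fin 3)))) ^ 2

/-- A set function `f : 2^V → ℝ` is supermodular iff for every `A ⊆ A'` and every `x`,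
`f(A) − f(A ∪ {x}) ≥ f(A') − f(A' ∪ {x})`. -/
def Supermodular {V : Type*} (f : Set V → ℝ) : Prop :=
  ∀ A A' : Set V, A ⊆ A' → ∀ x : V,
    f A - f (A ∪ {x}) ≥ f A' - f (A' ∪ {x})

/-- If `p ∈ K` and `v - p` is orthogonal to `K`, then the distance from `v` to `K`
equals `‖v - p‖`. -/
lemma infDist_eq_of_perp {E : Type*} [NormedAddCommGroup E] [InnerProductSpace ℝ E]
    (K : Submodule ℝ E) (v p : E) (hp : p ∈ K)
    (h : ∀ x ∈ K, inner ℝ (v - p) x = (0 : ℝ)) :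
    Metric.infDist v (K : Set E) = ‖v - p‖ := by
  have key : ∀ y ∈ K, ‖v - p‖ ≤ dist v y := by
    intro y hy
    rw [dist_eq_norm]
    have h2 : ‖v - y‖ ^ 2 = ‖v - p‖ ^ 2 + ‖p - y‖ ^ 2 := by
      have hvy : v - y = (v - p) + (p - y) := by abel
      rw [hvy, norm_add_sq_real, h _ (K.sub_mem hp hy)]
      ring
    nlinarith [norm_nonneg (v - p), norm_nonneg (v - y), norm_nonneg (p - y)]
  apply le_antisymm
  · simpa [dist_eq_norm] using Metric.infDist_le_dist_of_mem hp
  · by_contra hlt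
    push_neg at hlt
    obtain ⟨y, hy, hd⟩ := (Metric.infDist_lt_iff ⟨0, K.zero_mem⟩).mp hlt
    exact absurd hd (not_lt.mpr (key y hy))

/-- A vector orthogonal to all generators is orthogonal to the span. -/
lemma perp_span {E : Type*} [NormedAddCommGroup E] [InnerProductSpace ℝ E]
    {s : Set E} (u : E) (h : ∀ y ∈ s, inner ℝ u y = (0 : ℝ)) :
    ∀ x ∈ Submodule.span ℝ s, inner ℝ u x = (0 : ℝ) := by
  intro x hx
  induction hx using Submodule.span_induction with
  | mem y hy => exact h y hy
  | zero => simp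
  | add a b _ _ ha hb => rw [inner_add_right, ha, hb]; ring
  | smul c a _ ha => rw [real_inner_smul_right, ha]; ring

noncomputable abbrev vv : EuclideanSpace ℝ (Fin 3) :=
  (WithLp.equiv 2 (Fin 3 → ℝ)).symm ![-1, 1, 1]

noncomputable abbrev MM : Matrix (Fin 3) (Fin 3) ℝ := !![1, 0, 1; 1, 1, 0; 0, 0, 1]

lemma distSq_0 : distSq vv MM {0} = 3 := by
  have h : Metric.infDist vv (colSpan MM {0} : Set (EuclideanSpace ℝ (Fin 3))) = ‖vv - 0‖ := by
    apply infDist_eq_of_perp _ _ _ (Submodule.zero_mem _)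
    apply perp_span
    rintro y ⟨j, hj, rfl⟩
    simp only [Set.mem_singleton_iff] at hj
    subst hj
    simp [col, PiLp.inner_apply, Fin.sum_univ_three]
  rw [distSq, h, ← real_inner_self_eq_norm_sq]
  simp [EuclideanSpace.norm_eq, Fin.sum_univ_three]
  norm_num

lemma distSq_02 : distSq vv MM {0, 2} = 3 := by
  have h : Metric.infDist vv (colSpan MM {0, 2} : Set (EuclideanSpace ℝ (Fin 3))) = ‖vv - 0‖ := by
    apply infDist_eq_of_perp _ _ _ (Submodule.zero_mem _)
    apply perp_span
    rintro y ⟨j, hj, rfl⟩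
    simp only [Set.mem_insert_iff, Set.mem_singleton_iff] at hj
    rcases hj with rfl | rfl <;>
      simp [col, PiLp.inner_apply, Fin.sum_univ_three]
  rw [distSq, h, ← real_inner_self_eq_norm_sq]
  simp [EuclideanSpace.norm_eq, Fin.sum_univ_three]
  norm_num

lemma distSq_01 : distSq vv MM {0, 1} = 1 := by
  set p : EuclideanSpace ℝ (Fin 3) := (WithLp.equiv 2 (Fin 3 → ℝ)).symm ![-1, 1, 0] with hp
  have hpe : p = (-1 : ℝ) • col MM 0 + (2 : ℝ) • col MM 1 := by
    apply (WithLp.equiv 2 (Fin 3 → ℝ)).injective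
    funext i
    fin_cases i <;> simp [col, hp] <;> norm_num
  have hpm : p ∈ colSpan MM {0, 1} := by
    rw [hpe]
    exact Submodule.add_mem _
      (Submodule.smul_mem _ _ (Submodule.subset_span ⟨0, by simp, rfl⟩))
      (Submodule.smul_mem _ _ (Submodule.subset_span ⟨1, by simp, rfl⟩))
  have hvp : vv - p = (WithLp.equiv 2 (Fin 3 → ℝ)).symm ![0, 0, 1] := by
    apply (WithLp.equiv 2 (Fin 3 → ℝ)).injective
    funext i
    fin_cases i <;> simp [hp] <;> norm_num
  have h : Metric.infDist vv (colSpan MM {0, 1} : Set (EuclideanSpace ℝ (Fin 3))) = ‖vv - p‖ := by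
    apply infDist_eq_of_perp _ _ _ hpm
    apply perp_span
    rintro y ⟨j, hj, rfl⟩
    simp only [Set.mem_insert_iff, Set.mem_singleton_iff] at hj
    rcases hj with rfl | rfl <;>
      simp [hvp, col, PiLp.inner_apply, Fin.sum_univ_three]
  rw [distSq, h, ← real_inner_self_eq_norm_sq, hvp]
  simp [EuclideanSpace.norm_eq, Fin.sum_univ_three]

lemma distSq_012 : distSq vv MM {0, 1, 2} = 0 := by
  have hv : vv = (-2 : ℝ) • col MM 0 + (3 : ℝ) • col MM 1 + (1 : ℝ) • col MM 2 := by
    apply (WithLp.equiv 2 (Fin 3 → ℝ)).injective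
    funext i
    fin_cases i <;> simp [col] <;> norm_num
  have hvm : vv ∈ colSpan MM {0, 1, 2} := by
    rw [hv]
    exact Submodule.add_mem _
      (Submodule.add_mem _
        (Submodule.smul_mem _ _ (Submodule.subset_span ⟨0, by simp, rfl⟩))
        (Submodule.smul_mem _ _ (Submodule.subset_span ⟨1, by simp, rfl⟩)))
      (Submodule.smul_mem _ _ (Submodule.subset_span ⟨2, by simp, rfl⟩))
  rw [distSq, Metric.infDist_zero_of_mem hvm]
  norm_num

/-- with `v = (-1,1,1)ᵀ`, `M` with rows `(1,0,1)`, `(1,1,0)`, `(0,0,1)`,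
and `f(S) = dist²(v, Range M(S))`, we have
`f({1,2}) − f({1,2,3}) > f({1}) − f({1,3})`; consequently `f` is not supermodular. -/
theorem distSq_not_supermodular :
    distSq ((WithLp.equiv 2 (Fin 3 → ℝ)).symm ![-1, 1, 1]) !![1, 0, 1; 1, 1, 0; 0, 0, 1] {0, 1}
        - distSq ((WithLp.equiv 2 (Fin 3 → ℝ)).symm ![-1, 1, 1]) !![1, 0, 1; 1, 1, 0; 0, 0, 1] {0, 1, 2}
      > distSq ((WithLp.equiv 2 (Fin 3 → ℝ)).symm ![-1, 1, 1]) !![1, 0, 1; 1, 1, 0; 0, 0, 1] {0}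
        - distSq ((WithLp.equiv 2 (Fin 3 → ℝ)).symm ![-1, 1, 1]) !![1, 0, 1; 1, 1, 0; 0, 0, 1] {0, 2} ∧
    ¬ Supermodular
        (distSq ((WithLp.equiv 2 (Fin 3 → ℝ)).symm ![-1, 1, 1]) !![1, 0, 1; 1, 1, 0; 0, 0, 1]) := by
  have e01 : distSq vv MM {0, 1} = 1 := distSq_01
  have e012 : distSq vv MM {0, 1, 2} = 0 := distSq_012
  have e0 : distSq vv MM {0} = 3 := distSq_0
  have e02 : distSq vv MM {0, 2} = 3 := distSq_02
  constructor
  · rw [e01, e012, e0, e02]; norm_num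
  · intro h
    have hsub : ({0} : Set (Fin 3)) ⊆ {0, 1} := by intro x hx; simp at hx; simp [hx]
    have := h {0} {0, 1} hsub 2
    have h1 : ({0} : Set (Fin 3)) ∪ {2} = {0, 2} := by ext x; simp; tauto
    have h2 : ({0, 1} : Set (Fin 3)) ∪ {2} = {0, 1, 2} := by ext x; simp; tauto
    rw [h1, h2] at this
    rw [e01, e012, e0, e02] at this
    norm_num at this
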